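/- arXiv:1001.2662 — 5 statements merged into one kernel-verified Lean document; each statement's English description precedes it below -/
import Mathlib

section
/- For any q-ary discrete memoryless channel W, the maximum-likelihood error probability satisfies P_e(W) ≤ (q-1)·Z(W). -/
open MeasureTheory Filter Real
open scoped Classical

noncomputable section

namespace Polar

/-- `IsChannel W` : `W x y` is the probability of output `y` given input `x`,
each row is a probability distribution. -/
def IsChannel {X Y : Type*} (W : X → Y → ℝ) : Prop :=
  (∀ x y, 0 ≤ W x y) ∧ ∀ x, HasSum (W x) 1

/-- Bhattacharyya parameter `Z_{x,x'}(W)` between inputs `x` and `x'`. -/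
def Zb {X Y : Type*} (W : X → Y → ℝ) (x x' : X) : ℝ :=
  ∑' y, Real.sqrt (W x y * W x' y)

/-- Average Bhattacharyya parameter `Z(W)`. -/
def Zavg {X Y : Type*} [Fintype X] (W : X → Y → ℝ) : ℝ :=
  (1 / ((Fintype.card X : ℝ) * ((Fintype.card X : ℝ) - 1))) *
    ∑ p ∈ Finset.univ.offDiag, Zb W p.1 p.2

/-- `P_e(W) ≤ (q-1) Z(W)`, where `P_e(W)` is the
maximum-likelihood error probability under uniform inputs. -/
theorem error_prob_le_bhattacharyya {X Y : Type*} [Fintype X] [Countable Y]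
    (hq : 2 ≤ Fintype.card X) (W : X → Y → ℝ) (hW : IsChannel W) :
    (1 / (Fintype.card X : ℝ)) *
        ∑ x, ∑' y, (if ∀ x', x' ≠ x → W x' y < W x y then 0 else W x y) ≤
      ((Fintype.card X : ℝ) - 1) * Zavg W := by
  obtain ⟨hnn, hsum⟩ := hW
  set q : ℝ := (Fintype.card X : ℝ) with hqdef
  have hq2 : (2:ℝ) ≤ q := by rw [hqdef]; exact_mod_cast hq
  have hq0 : (0:ℝ) < q := by linarith
  have hq1 : (0:ℝ) < q - 1 := by linarith
  have hWsum : ∀ x, Summable (W x) := fun x => (hsum x).summable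
  have hsqrt_le : ∀ (a b : ℝ), 0 ≤ a → 0 ≤ b → Real.sqrt (a * b) ≤ a + b := by
    intro a b ha hb
    have h1 : a * b ≤ (a + b) ^ 2 := by nlinarith
    calc Real.sqrt (a * b) ≤ Real.sqrt ((a + b) ^ 2) := Real.sqrt_le_sqrt h1
      _ = a + b := by rw [Real.sqrt_sq (by linarith)]
  have hsqrt_sum : ∀ x x', Summable (fun y => Real.sqrt (W x y * W x' y)) := by
    intro x x'
    exact Summable.of_nonneg_of_le (fun y => Real.sqrt_nonneg _)
      (fun y => hsqrt_le _ _ (hnn x y) (hnn x' y)) ((hWsum x).add (hWsum x'))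
  -- pointwise bound
  have key : ∀ x y,
      (if ∀ x', x' ≠ x → W x' y < W x y then 0 else W x y) ≤
        ∑ x' ∈ Finset.univ.erase x, Real.sqrt (W x y * W x' y) := by
    intro x y
    by_cases h : ∀ x', x' ≠ x → W x' y < W x y
    · rw [if_pos h]
      exact Finset.sum_nonneg fun _ _ => Real.sqrt_nonneg _
    · rw [if_neg h]
      push_neg at h
      obtain ⟨x', hx', hle⟩ := h
      have h1 : W x y ≤ Real.sqrt (W x y * W x' y) := by
        have : (W x y) ^ 2 ≤ W x y * W x' y := by nlinarith [hnn x y]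
        calc W x y = Real.sqrt ((W x y) ^ 2) := (Real.sqrt_sq (hnn x y)).symm
          _ ≤ Real.sqrt (W x y * W x' y) := Real.sqrt_le_sqrt this
      refine h1.trans (Finset.single_le_sum (f := fun x' => Real.sqrt (W x y * W x' y)) (fun i _ => Real.sqrt_nonneg _) ?_)
      exact Finset.mem_erase.mpr ⟨hx', Finset.mem_univ _⟩
  -- tsum bound per x
  have tkey : ∀ x,
      (∑' y, (if ∀ x', x' ≠ x → W x' y < W x y then 0 else W x y)) ≤
        ∑ x' ∈ Finset.univ.erase x, Zb W x x' := by
    intro x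
    have herrsum : Summable (fun y => if ∀ x', x' ≠ x → W x' y < W x y then 0 else W x y) := by
      refine Summable.of_nonneg_of_le (fun y => ?_) (fun y => ?_) (hWsum x)
      · split <;> simp [hnn x y]
      · split <;> simp [hnn x y]
    calc (∑' y, (if ∀ x', x' ≠ x → W x' y < W x y then 0 else W x y))
        ≤ ∑' y, ∑ x' ∈ Finset.univ.erase x, Real.sqrt (W x y * W x' y) :=
          Summable.tsum_le_tsum (key x) herrsum (summable_sum fun x' _ => hsqrt_sum x x')
      _ = ∑ x' ∈ Finset.univ.erase x, Zb W x x' :=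
          Summable.tsum_finsetSum fun x' _ => hsqrt_sum x x'
  -- sum over offDiag
  have hsplit : ∑ p ∈ Finset.univ.offDiag, Zb W p.1 p.2
      = ∑ x, ∑ x' ∈ Finset.univ.erase x, Zb W x x' := by
    rw [show (Finset.univ : Finset X).offDiag = (Finset.univ ×ˢ Finset.univ).filter (fun a : X × X => a.1 ≠ a.2) by ext; simp [Finset.mem_offDiag], Finset.sum_filter, Finset.sum_product]
    refine Finset.sum_congr rfl fun x _ => ?_
    rw [← Finset.sum_filter]
    refine Finset.sum_congr ?_ fun _ _ => rfl
    ext y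
    simp [Finset.mem_erase, ne_comm, eq_comm]
  have hA : ∑ x, ∑' y, (if ∀ x', x' ≠ x → W x' y < W x y then 0 else W x y)
      ≤ ∑ p ∈ Finset.univ.offDiag, Zb W p.1 p.2 := by
    rw [hsplit]; exact Finset.sum_le_sum fun x _ => tkey x
  unfold Zavg
  rw [← hqdef]
  have hrw : (q - 1) * (1 / (q * (q - 1)) * ∑ p ∈ Finset.univ.offDiag, Zb W p.1 p.2)
      = 1 / q * ∑ p ∈ Finset.univ.offDiag, Zb W p.1 p.2 := by
    field_simp
  rw [hrw]
  exact mul_le_mul_of_nonneg_left hA (by positivity)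

end Polar
end
end

section
/- For any q-ary discrete memoryless channel W, the symmetric capacity satisfies I(W) ≥ log_q( q / (1 + (q-1)·Z(W)) ). -/
open MeasureTheory Filter Real
open scoped Classical

noncomputable section

namespace Polar

/-- Symmetric capacity `I(W)` (logarithms to base `q = |X|`). -/
def symCap {X Y : Type*} [Fintype X] (W : X → Y → ℝ) : ℝ :=
  ∑ x, ∑' y, (1 / (Fintype.card X : ℝ)) * W x y *
    Real.logb (Fintype.card X) (W x y / ((1 / (Fintype.card X : ℝ)) * ∑ x', W x' y))

/-- AM-GM for square roots. -/
lemma sqrt_mul_le_half_add (a b : ℝ) (ha : 0 ≤ a) (hb : 0 ≤ b) :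
    Real.sqrt (a * b) ≤ (a + b) / 2 := by
  rw [show (a + b) / 2 = Real.sqrt (((a + b) / 2) ^ 2) from (Real.sqrt_sq (by positivity)).symm]
  exact Real.sqrt_le_sqrt (by nlinarith [sq_nonneg (a - b)])

/-- Cauchy–Schwarz for tsums of nonnegative reals. -/
lemma tsum_mul_le_sqrt_mul_sqrt' {ι : Type*} (f g : ι → ℝ)
    (hf0 : ∀ i, 0 ≤ f i) (hg0 : ∀ i, 0 ≤ g i)
    (hf : Summable fun i => f i ^ 2) (hg : Summable fun i => g i ^ 2) :
    ∑' i, f i * g i ≤ Real.sqrt (∑' i, f i ^ 2) * Real.sqrt (∑' i, g i ^ 2) := by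
  have hfg : Summable fun i => f i * g i := by
    refine Summable.of_nonneg_of_le (fun i => mul_nonneg (hf0 i) (hg0 i)) (fun i => ?_)
      ((hf.add hg).div_const 2)
    nlinarith [sq_nonneg (f i - g i)]
  refine Summable.tsum_le_of_sum_le hfg fun s => ?_
  calc ∑ i ∈ s, f i * g i
      ≤ Real.sqrt (∑ i ∈ s, f i ^ 2) * Real.sqrt (∑ i ∈ s, g i ^ 2) :=
        Real.sum_mul_le_sqrt_mul_sqrt s f g
    _ ≤ _ :=
        mul_le_mul (Real.sqrt_le_sqrt (Summable.sum_le_tsum s (fun i _ => sq_nonneg _) hf))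
          (Real.sqrt_le_sqrt (Summable.sum_le_tsum s (fun i _ => sq_nonneg _) hg))
          (Real.sqrt_nonneg _) (Real.sqrt_nonneg _)

/-- `I(W) ≥ log_q (q / (1 + (q-1) Z(W)))`. -/
theorem symCap_ge_of_bhattacharyya {X Y : Type*} [Fintype X] [Countable Y]
    (hq : 2 ≤ Fintype.card X) (W : X → Y → ℝ) (hW : IsChannel W) :
    Real.logb (Fintype.card X)
        ((Fintype.card X : ℝ) / (1 + ((Fintype.card X : ℝ) - 1) * Zavg W)) ≤
      symCap W := by
  classical
  obtain ⟨hW0, hWrow⟩ := hW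
  have hq2 : (2 : ℝ) ≤ (Fintype.card X : ℝ) := by exact_mod_cast hq
  set q : ℝ := (Fintype.card X : ℝ) with hqdef
  have hq0 : (0 : ℝ) < q := by linarith
  have hq1 : (1 : ℝ) < q := by linarith
  have hQ0 : (0 : ℝ) < 1 / q := by positivity
  -- the output distribution
  set P : Y → ℝ := fun y => 1 / q * ∑ x, W x y with hPdef
  have hPy : ∀ y, P y = 1 / q * ∑ x, W x y := fun y => rfl
  have hP0 : ∀ y, 0 ≤ P y := fun y =>
    mul_nonneg hQ0.le (Finset.sum_nonneg fun x _ => hW0 x y)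
  have hPW : ∀ x y, 1 / q * W x y ≤ P y := fun x y =>
    mul_le_mul_of_nonneg_left
      (Finset.single_le_sum (fun x' _ => hW0 x' y) (Finset.mem_univ x)) hQ0.le
  have hPsum : HasSum P 1 := by
    have h1 : HasSum (fun y => ∑ x, W x y) q := by
      simpa using hasSum_sum fun (x : X) (_ : x ∈ Finset.univ) => hWrow x
    have h2 := h1.mul_left (1 / q)
    have h3 : 1 / q * q = 1 := by field_simp
    rw [h3] at h2
    exact h2
  -- the Bhattacharyya-type kernels
  set r : X → Y → ℝ := fun x y => Real.sqrt (W x y * P y) with hrdef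
  have hr0 : ∀ x y, 0 ≤ r x y := fun x y => Real.sqrt_nonneg _
  have hrsumm : ∀ x, Summable (r x) := fun x =>
    Summable.of_nonneg_of_le (hr0 x) (fun y => sqrt_mul_le_half_add _ _ (hW0 x y) (hP0 y))
      (((hWrow x).summable.add hPsum.summable).div_const 2)
  set a : X → ℝ := fun x => ∑' y, r x y with hadef
  have ha_lb : ∀ x, Real.sqrt (1 / q) ≤ a x := by
    intro x
    have key : ∀ y, Real.sqrt (1 / q) * W x y ≤ r x y := by
      intro y
      have h1 : Real.sqrt (1 / q) * W x y = Real.sqrt (1 / q * W x y * W x y) := by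
        rw [mul_assoc, Real.sqrt_mul hQ0.le, Real.sqrt_mul_self (hW0 x y)]
      rw [h1]
      refine Real.sqrt_le_sqrt ?_
      have h2 := hPW x y
      have h3 := hW0 x y
      nlinarith
    have h4 := Summable.tsum_le_tsum key ((hWrow x).summable.mul_left _) (hrsumm x)
    calc Real.sqrt (1 / q) = Real.sqrt (1 / q) * 1 := by ring
      _ = ∑' y, Real.sqrt (1 / q) * W x y := ((hWrow x).mul_left _).tsum_eq.symm
      _ ≤ a x := h4
  have ha0 : ∀ x, 0 ≤ a x := fun x => tsum_nonneg (hr0 x)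
  set A : ℝ := 1 / q * ∑ x, a x with hAdef
  have hA_lb : Real.sqrt (1 / q) ≤ A := by
    have h1 : q * Real.sqrt (1 / q) ≤ ∑ x, a x := by
      calc q * Real.sqrt (1 / q) = ∑ _x : X, Real.sqrt (1 / q) := by
            simp [Finset.sum_const, Finset.card_univ, nsmul_eq_mul, hqdef]
        _ ≤ ∑ x, a x := Finset.sum_le_sum fun x _ => ha_lb x
    have h2 := mul_le_mul_of_nonneg_left h1 hQ0.le
    calc Real.sqrt (1 / q) = 1 / q * (q * Real.sqrt (1 / q)) := by field_simp
      _ ≤ A := h2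
  have hA0 : 0 < A := lt_of_lt_of_le (Real.sqrt_pos.2 hQ0) hA_lb
  -- the quantity B
  set sY : Y → ℝ := fun y => 1 / q * ∑ x, Real.sqrt (W x y) with hsYdef
  have hsY0 : ∀ y, 0 ≤ sY y :=
    fun y => mul_nonneg hQ0.le (Finset.sum_nonneg fun x _ => Real.sqrt_nonneg _)
  have hsqW : ∀ x x' : X, Summable fun y => Real.sqrt (W x y * W x' y) := fun x x' =>
    Summable.of_nonneg_of_le (fun y => Real.sqrt_nonneg _)
      (fun y => sqrt_mul_le_half_add _ _ (hW0 x y) (hW0 x' y))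
      (((hWrow x).summable.add (hWrow x').summable).div_const 2)
  have hsy_sq : ∀ y, sY y ^ 2 = (1 / q) ^ 2 * ∑ x, ∑ x', Real.sqrt (W x y * W x' y) := by
    intro y
    have h1 : (∑ x, Real.sqrt (W x y)) ^ 2 = ∑ x, ∑ x', Real.sqrt (W x y * W x' y) := by
      rw [sq, Finset.sum_mul_sum]
      exact Finset.sum_congr rfl fun x _ => Finset.sum_congr rfl fun x' _ =>
        (Real.sqrt_mul (hW0 x y) _).symm
    rw [hsYdef]
    simp only [mul_pow, h1]
  have hBsum : HasSum (fun y => sY y ^ 2) ((1 / q) ^ 2 * ∑ x, ∑ x', Zb W x x') := by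
    have h1 : HasSum (fun y => ∑ x, ∑ x', Real.sqrt (W x y * W x' y))
        (∑ x, ∑ x', Zb W x x') := by
      refine hasSum_sum fun x _ => hasSum_sum fun x' _ => ?_
      exact (hsqW x x').hasSum
    have h2 := h1.mul_left ((1 / q) ^ 2)
    have h3 : (fun y => sY y ^ 2)
        = fun y => (1 / q) ^ 2 * ∑ x, ∑ x', Real.sqrt (W x y * W x' y) := funext hsy_sq
    rw [h3]
    exact h2
  set B : ℝ := (1 / q) ^ 2 * ∑ x, ∑ x', Zb W x x' with hBdef
  have hZb0 : ∀ x x' : X, 0 ≤ Zb W x x' := fun x x' =>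
    tsum_nonneg fun y => Real.sqrt_nonneg _
  have hZbdiag : ∀ x, Zb W x x = 1 := by
    intro x
    have h1 : (fun y => Real.sqrt (W x y * W x y)) = W x :=
      funext fun y => Real.sqrt_mul_self (hW0 x y)
    rw [Zb, h1, (hWrow x).tsum_eq]
  have hsplit : ∑ x, ∑ x', Zb W x x'
      = q + ∑ p ∈ Finset.univ.offDiag, Zb W p.1 p.2 := by
    rw [← Finset.sum_product' (f := fun x x' => Zb W x x'),
      ← Finset.diag_union_offDiag, Finset.sum_union (Finset.disjoint_diag_offDiag _),
      Finset.sum_diag]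
    simp [hZbdiag, Finset.sum_const, Finset.card_univ, hqdef]
  have hZavg0 : 0 ≤ Zavg W := by
    rw [Zavg, ← hqdef]
    have h1 : (0:ℝ) ≤ ∑ p ∈ Finset.univ.offDiag, Zb W p.1 p.2 :=
      Finset.sum_nonneg fun p _ => hZb0 p.1 p.2
    have h2 : (0:ℝ) ≤ 1 / (q * (q - 1)) := div_nonneg zero_le_one (by nlinarith)
    exact mul_nonneg h2 h1
  have hB_eq : q * B = 1 + (q - 1) * Zavg W := by
    rw [hBdef, hsplit, Zavg, ← hqdef]
    have hq1' : q - 1 ≠ 0 := by linarith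
    field_simp
  have hB_pos : 0 < B := by
    have h1 : (0:ℝ) < 1 + (q - 1) * Zavg W := by nlinarith
    nlinarith
  -- Cauchy–Schwarz : A ≤ √B
  have hA_eq : A = ∑' y, Real.sqrt (P y) * sY y := by
    rw [hAdef, hadef, ← Summable.tsum_finsetSum fun x _ => hrsumm x, ← tsum_mul_left]
    congr 1
    funext y
    have h1 : ∀ x : X, r x y = Real.sqrt (W x y) * Real.sqrt (P y) :=
      fun x => Real.sqrt_mul (hW0 x y) _
    rw [Finset.sum_congr rfl fun x _ => h1 x, ← Finset.sum_mul, hsYdef]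
    ring
  have hCS : A ≤ Real.sqrt B := by
    rw [hA_eq]
    have h1 : Summable fun y => Real.sqrt (P y) ^ 2 := by
      have : (fun y => Real.sqrt (P y) ^ 2) = P := funext fun y => Real.sq_sqrt (hP0 y)
      rw [this]; exact hPsum.summable
    have h2 := tsum_mul_le_sqrt_mul_sqrt' (fun y => Real.sqrt (P y)) sY
      (fun y => Real.sqrt_nonneg _) hsY0 h1 hBsum.summable
    have h3 : ∑' y, Real.sqrt (P y) ^ 2 = 1 := by
      have : (fun y => Real.sqrt (P y) ^ 2) = P := funext fun y => Real.sq_sqrt (hP0 y)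
      rw [this]; exact hPsum.tsum_eq
    have h4 : ∑' y, sY y ^ 2 = B := hBsum.tsum_eq
    rw [h3, h4] at h2
    simpa using h2
  -- the main pointwise bound
  set N : X → Y → ℝ := fun x y => 1 / q * W x y * Real.log (P y / W x y) with hNdef
  set G : X → Y → ℝ := fun x y =>
    (2 * Real.log A - 2) * (1 / q * W x y) + 2 / A * (1 / q * r x y) with hGdef
  have hNG : ∀ x y, N x y ≤ G x y := by
    intro x y
    by_cases hw : W x y = 0
    · simp [hNdef, hGdef, hrdef, hw]
    · have hw' : 0 < W x y := lt_of_le_of_ne (hW0 x y) (Ne.symm hw)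
      have hp' : 0 < P y := lt_of_lt_of_le (by positivity) (hPW x y)
      set t : ℝ := Real.sqrt (P y / W x y) with htdef
      have ht0 : 0 < t := Real.sqrt_pos.2 (by positivity)
      have hlogt : Real.log (P y / W x y) = 2 * Real.log t := by
        rw [htdef, Real.log_sqrt (by positivity)]; ring
      have h2 : Real.log t ≤ t / A - 1 + Real.log A := by
        have he : t = t / A * A := by field_simp
        calc Real.log t = Real.log (t / A * A) := by rw [← he]
          _ = Real.log (t / A) + Real.log A :=
              Real.log_mul (by positivity) (ne_of_gt hA0)
          _ ≤ t / A - 1 + Real.log A := by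
              have := Real.log_le_sub_one_of_pos (show (0:ℝ) < t / A by positivity)
              linarith
      have h3 : W x y * t = r x y := by
        rw [htdef, hrdef]
        rw [show P y / W x y = W x y * P y / W x y ^ 2 by field_simp]
        rw [Real.sqrt_div' _ (sq_nonneg (W x y)), Real.sqrt_sq (hW0 x y)]
        field_simp
      have hc0 : 0 ≤ 1 / q * W x y := by positivity
      calc N x y = 1 / q * W x y * (2 * Real.log t) := by rw [hNdef]; simp only; rw [hlogt]
        _ ≤ 1 / q * W x y * (2 * (t / A - 1 + Real.log A)) := by
            have h4 : 2 * Real.log t ≤ 2 * (t / A - 1 + Real.log A) := by linarith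
            exact mul_le_mul_of_nonneg_left h4 hc0
        _ = G x y := by
            rw [hGdef]; simp only; rw [← h3]; field_simp; ring
  have hGsumm : ∀ x, Summable (G x) := by
    intro x
    refine (((hWrow x).summable.mul_left ((2 * Real.log A - 2) * (1 / q))).add
      ((hrsumm x).mul_left (2 / A * (1 / q)))).congr fun y => ?_
    simp only [hGdef]; ring
  have hNsumm : ∀ x, Summable (N x) := by
    intro x
    set L : Y → ℝ := fun y => 1 / q * Real.log (1 / q) * W x y with hLdef
    have hLsumm : Summable L := (hWrow x).summable.mul_left _
    have hlb : ∀ y, L y ≤ N x y := by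
      intro y
      by_cases hw : W x y = 0
      · simp [hNdef, hLdef, hw]
      · have hw' : 0 < W x y := lt_of_le_of_ne (hW0 x y) (Ne.symm hw)
        have h1 : (1 / q : ℝ) ≤ P y / W x y := by
          rw [le_div_iff₀ hw']
          calc 1 / q * W x y ≤ P y := hPW x y
            _ = P y := rfl
        have h2 : Real.log (1 / q) ≤ Real.log (P y / W x y) :=
          Real.log_le_log hQ0 h1
        have h3 := mul_le_mul_of_nonneg_left h2 (show (0:ℝ) ≤ 1 / q * W x y by positivity)
        simp only [hNdef, hLdef]
        calc 1 / q * Real.log (1 / q) * W x y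
            = 1 / q * W x y * Real.log (1 / q) := by ring
          _ ≤ 1 / q * W x y * Real.log (P y / W x y) := h3
    have h0 : Summable fun y => N x y - L y :=
      Summable.of_nonneg_of_le (fun y => sub_nonneg.2 (hlb y))
        (fun y => sub_le_sub (hNG x y) le_rfl) ((hGsumm x).sub hLsumm)
    have := h0.add hLsumm
    refine this.congr fun y => ?_
    ring
  have hGsum : ∀ x, ∑' y, G x y = (2 * Real.log A - 2) * (1 / q) + 2 / A * (1 / q * a x) := by
    intro x
    have h1 : ∑' y, G x y
        = ∑' y, ((2 * Real.log A - 2) * (1 / q * W x y) + 2 / A * (1 / q * r x y)) := rfl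
    rw [h1, Summable.tsum_add (((hWrow x).summable.mul_left (1/q)).mul_left _)
      (((hrsumm x).mul_left (1/q)).mul_left _)]
    rw [tsum_mul_left, tsum_mul_left, tsum_mul_left, tsum_mul_left,
      (hWrow x).tsum_eq, hadef]
    ring
  have hmain : ∑ x, ∑' y, N x y ≤ Real.log B := by
    have h1 : ∀ x, ∑' y, N x y ≤ ∑' y, G x y :=
      fun x => Summable.tsum_le_tsum (hNG x) (hNsumm x) (hGsumm x)
    have h2 : ∑ x, ∑' y, G x y = 2 * Real.log A := by
      rw [Finset.sum_congr rfl fun x _ => hGsum x, Finset.sum_add_distrib,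
        Finset.sum_const, Finset.card_univ, nsmul_eq_mul]
      have hsa : ∑ x, 2 / A * (1 / q * a x) = 2 := by
        rw [← Finset.mul_sum, ← Finset.mul_sum, ← hAdef]
        field_simp
      rw [hsa, ← hqdef]
      field_simp
      ring
    calc ∑ x, ∑' y, N x y ≤ ∑ x, ∑' y, G x y := Finset.sum_le_sum fun x _ => h1 x
      _ = 2 * Real.log A := h2
      _ ≤ Real.log B := by
          have h3 : Real.log A ≤ Real.log (Real.sqrt B) := Real.log_le_log hA0 hCS
          rw [Real.log_sqrt hB_pos.le] at h3
          linarith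
  -- rewrite symCap
  have hlogq : 0 < Real.log q := Real.log_pos hq1
  have hpoint : ∀ x y, 1 / q * W x y * Real.logb q (W x y / P y) = -N x y / Real.log q := by
    intro x y
    by_cases hw : W x y = 0
    · simp [hNdef, hw]
    · have hw' : 0 < W x y := lt_of_le_of_ne (hW0 x y) (Ne.symm hw)
      have hp' : 0 < P y := lt_of_lt_of_le (by positivity) (hPW x y)
      simp only [hNdef, Real.logb, Real.log_div (ne_of_gt hw') (ne_of_gt hp'),
        Real.log_div (ne_of_gt hp') (ne_of_gt hw')]
      field_simp
      ring
  have hsym : symCap W = (∑ x, -∑' y, N x y) / Real.log q := by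
    rw [symCap, ← hqdef, Finset.sum_div]
    refine Finset.sum_congr rfl fun x _ => ?_
    rw [← tsum_neg, ← tsum_div_const]
    refine tsum_congr fun y => ?_
    rw [← hPy y, hpoint x y]
  -- final assembly
  have hT : q / (1 + (q - 1) * Zavg W) = 1 / B := by
    rw [← hB_eq, div_eq_div_iff (mul_pos hq0 hB_pos).ne' hB_pos.ne']
    ring
  rw [hT, hsym]
  have hsumneg : ∑ x, -∑' y, N x y = -∑ x, ∑' y, N x y := by
    rw [← Finset.sum_neg_distrib]
  rw [hsumneg, Real.logb, one_div, Real.log_inv]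
  have hfin : -Real.log B ≤ -∑ x, ∑' y, N x y := neg_le_neg hmain
  exact div_le_div_of_nonneg_right hfin hlogq.le


end Polar
end
end

section
/- For any q-ary discrete memoryless channel W, the symmetric capacity satisfies I(W) ≤ log_q(q/2) + (log_q 2)·√(1 − Z(W)²). -/
open MeasureTheory Filter Real
open scoped Classical

noncomputable section

namespace Polar

/-- convexity helper -/
lemma g_nonpos {u : ℝ} (h1 : 1/2 ≤ u) (h2 : u ≤ 1) :
    u * Real.log u + (1 - u) * Real.log (1 - u) + (2 - 2*u) * Real.log 2 ≤ 0 := by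
  set g : ℝ → ℝ := fun v => v * Real.log v + (1 - v) * Real.log (1 - v) + (2 - 2*v) * Real.log 2
    with hg
  have hconv : ConvexOn ℝ (Set.Icc (0:ℝ) 1) g := by
    constructor
    · exact convex_Icc 0 1
    · intro x hx y hy a b ha hb hab
      simp only [smul_eq_mul, hg]
      have A := Real.convexOn_mul_log.2 (Set.mem_Ici.2 hx.1) (Set.mem_Ici.2 hy.1) ha hb hab
      have B := Real.convexOn_mul_log.2 (x := 1 - x) (y := 1 - y)
        (Set.mem_Ici.2 (by linarith [hx.2])) (Set.mem_Ici.2 (by linarith [hy.2])) ha hb hab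
      simp only [smul_eq_mul] at A B
      have e : 1 - (a*x + b*y) = a*(1-x) + b*(1-y) := by linarith
      have lin : (2 - 2*(a*x + b*y)) * Real.log 2
          = a*((2 - 2*x)*Real.log 2) + b*((2 - 2*y)*Real.log 2) := by
        linear_combination (-2*Real.log 2) * hab
      rw [e, lin]
      linarith [A, B]
  have h12 : g (1/2) = 0 := by
    simp only [hg]
    rw [show (1:ℝ) - 1/2 = 1/2 by norm_num, show (1:ℝ)/2 = 2⁻¹ by norm_num, Real.log_inv]
    ring
  have h1' : g 1 = 0 := by
    simp only [hg]
    norm_num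
  have := hconv.le_on_segment' (x := 1/2) (y := 1) (a := 2 - 2*u) (b := 2*u - 1)
    (by norm_num) (by norm_num) (by linarith) (by linarith) (by linarith)
  simp only [smul_eq_mul] at this
  have e : (2 - 2*u) * (1/2) + (2*u - 1) * 1 = u := by ring
  rw [e, h12, h1'] at this
  simpa using this

/-- binary entropy pointwise bound, ordered case -/
lemma pair_log_aux {a b : ℝ} (hb : 0 ≤ b) (hba : b ≤ a) :
    a * Real.log (2*a/(a+b)) + b * Real.log (2*b/(a+b)) ≤ |a - b| * Real.log 2 := by
  have ha : 0 ≤ a := le_trans hb hba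
  rcases eq_or_lt_of_le ha with h0 | hapos
  · have hb0 : b = 0 := le_antisymm (by linarith) hb
    simp [← h0, hb0]
  rcases eq_or_lt_of_le hb with hb0 | hbpos
  · rw [← hb0]
    have : 2*a/(a+0) = 2 := by field_simp; ring
    rw [this]
    simp [abs_of_nonneg ha]
  · -- a, b > 0
    have hs : 0 < a + b := by linarith
    obtain ⟨u, hu⟩ : ∃ u, u = a / (a + b) := ⟨_, rfl⟩
    have hu1 : u ≤ 1 := by rw [hu, div_le_one hs]; linarith
    have hu2 : 1/2 ≤ u := by rw [hu, le_div_iff₀ hs]; linarith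
    have hupos : 0 < u := by rw [hu]; positivity
    have h1u : 1 - u = b / (a+b) := by rw [hu]; field_simp; ring
    have h1upos : 0 < 1 - u := by rw [h1u]; positivity
    have hA : a = (a+b) * u := by rw [hu]; field_simp
    have hB : b = (a+b) * (1 - u) := by rw [h1u]; field_simp
    have e1 : 2*a/(a+b) = 2*u := by rw [hu, mul_div_assoc]
    have e2 : 2*b/(a+b) = 2*(1-u) := by rw [h1u, mul_div_assoc]
    rw [e1, e2]
    have l1 : Real.log (2*u) = Real.log 2 + Real.log u := Real.log_mul (by norm_num) (ne_of_gt hupos)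
    have l2 : Real.log (2*(1-u)) = Real.log 2 + Real.log (1-u) :=
      Real.log_mul (by norm_num) (ne_of_gt h1upos)
    have habs : |a - b| = a - b := abs_of_nonneg (by linarith)
    rw [l1, l2, habs]
    have key := g_nonpos hu2 hu1
    have key' := mul_le_mul_of_nonneg_left key hs.le
    have expand : (a+b) * (u*Real.log u + (1-u)*Real.log (1-u) + (2-2*u)*Real.log 2)
        = a*Real.log u + b*Real.log (1-u) + 2*b*Real.log 2 := by
      linear_combination (-Real.log u)*hA + (-Real.log (1-u) - 2*Real.log 2)*hB
    rw [mul_zero] at key'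
    rw [expand] at key'
    linarith [key']

lemma pair_log {a b : ℝ} (ha : 0 ≤ a) (hb : 0 ≤ b) :
    a * Real.log (2*a/(a+b)) + b * Real.log (2*b/(a+b)) ≤ |a - b| * Real.log 2 := by
  rcases le_total b a with h | h
  · exact pair_log_aux hb h
  · have := pair_log_aux ha h
    rw [add_comm b a, abs_sub_comm b a] at this
    linarith

/-- tangent line / Cauchy-Schwarz pointwise bound -/
lemma abs_sub_le_tangent {a b t : ℝ} (ha : 0 ≤ a) (hb : 0 ≤ b) (ht0 : 0 ≤ t) (ht1 : t ≤ 1) :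
    |a - b| * Real.sqrt (1 - t^2) ≤ a + b - 2*t*Real.sqrt (a*b) := by
  set r := Real.sqrt (a*b) with hrdef
  have hr0 : 0 ≤ r := Real.sqrt_nonneg _
  have hr2 : r^2 = a*b := Real.sq_sqrt (mul_nonneg ha hb)
  have h2r : 2*r ≤ a + b := by
    nlinarith [sq_nonneg (Real.sqrt a - Real.sqrt b), Real.sq_sqrt ha, Real.sq_sqrt hb,
      Real.sqrt_mul_self ha, Real.sqrt_nonneg a, Real.sqrt_nonneg b,
      Real.sqrt_mul ha b]
  have hRHS : 0 ≤ a + b - 2*t*r := by nlinarith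
  have ht2 : 0 ≤ 1 - t^2 := by nlinarith
  have lhs_eq : |a - b| * Real.sqrt (1 - t^2) = Real.sqrt ((a-b)^2 * (1 - t^2)) := by
    rw [Real.sqrt_mul (sq_nonneg _), Real.sqrt_sq_eq_abs]
  rw [lhs_eq]
  have : a + b - 2*t*r = Real.sqrt ((a + b - 2*t*r)^2) := by
    rw [Real.sqrt_sq hRHS]
  rw [this]
  apply Real.sqrt_le_sqrt
  nlinarith [sq_nonneg (t*(a+b) - 2*r)]


lemma sum_offDiag_eq {α M : Type*} [Fintype α] [AddCommMonoid M] (g : α × α → M) :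
    ∑ p ∈ Finset.univ.offDiag, g p = ∑ x, ∑ x' ∈ Finset.univ.erase x, g (x, x') := by
  classical
  rw [show (Finset.univ : Finset α).offDiag = (Finset.univ ×ˢ Finset.univ).filter (fun a : α × α => a.1 ≠ a.2) by ext; simp, Finset.sum_filter, Finset.sum_product]
  refine Finset.sum_congr rfl fun x _ => ?_
  rw [← Finset.sum_filter]
  apply Finset.sum_congr _ (fun _ _ => rfl)
  ext x'
  simp [ne_comm, eq_comm, and_comm]

lemma sum_offDiag_swap {α M : Type*} [Fintype α] [AddCommMonoid M] (g : α × α → M) :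
    ∑ p ∈ Finset.univ.offDiag, g (p.2, p.1) = ∑ p ∈ Finset.univ.offDiag, g p := by
  classical
  apply Finset.sum_equiv (Equiv.prodComm α α)
  · intro p
    simp [Finset.mem_offDiag, ne_comm]
  · intro p _
    rfl

set_option maxHeartbeats 1600000 in
lemma master {X Y : Type*} [Fintype X] [Countable Y]
    (hq : 2 ≤ Fintype.card X) (W : X → Y → ℝ) (hW : IsChannel W)
    {t : ℝ} (ht0 : 0 ≤ t) (ht1 : t < 1) :
    symCap W ≤ Real.logb (Fintype.card X) ((Fintype.card X : ℝ) / 2) +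
      Real.logb (Fintype.card X) 2 * ((1 - t * Zavg W) / Real.sqrt (1 - t^2)) := by
  obtain ⟨hW0, hW1⟩ := hW
  set q : ℝ := (Fintype.card X : ℝ) with hqdef
  have hq2 : (2:ℝ) ≤ q := by rw [hqdef]; exact_mod_cast hq
  have hq0 : 0 < q := by linarith
  have hq1 : 1 < q := by linarith
  have hlq : 0 < Real.log q := Real.log_pos hq1
  have hqm1 : 0 < q - 1 := by linarith
  have hqq : q * (q - 1) ≠ 0 := by positivity
  have hl2 : (0.6931471803 : ℝ) < Real.log 2 := Real.log_two_gt_d9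
  have hl2q : Real.log 2 ≤ Real.log q := Real.log_le_log (by norm_num) hq2
  have hst : 0 < Real.sqrt (1 - t^2) := Real.sqrt_pos.2 (by nlinarith)
  have hlogb2 : 0 ≤ Real.logb q 2 := by
    rw [Real.logb]; positivity
  set S : Y → ℝ := fun y => ∑ x, W x y with hSdef
  have hS0 : ∀ y, 0 ≤ S y := fun y => Finset.sum_nonneg fun x _ => hW0 x y
  have hWS : ∀ x y, W x y ≤ S y := fun x y =>
    Finset.single_le_sum (fun x _ => hW0 x y) (Finset.mem_univ x)
  have hWsum : ∀ x, Summable (W x) := fun x => (hW1 x).summable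
  have hWt : ∀ x : X, ∑' y, W x y = 1 := fun x => (hW1 x).tsum_eq
  have hSsum : Summable S := summable_sum fun x _ => hWsum x
  have hSt : ∑' y, S y = q := by
    rw [hSdef, Summable.tsum_finsetSum fun x _ => hWsum x]
    simp [hWt, hqdef]
  -- the integrand
  set F : X → Y → ℝ := fun x y => 1/q * W x y * Real.logb q (W x y / (1/q * S y)) with hFdef
  have hsymCap : symCap W = ∑ x, ∑' y, F x y := rfl
  -- bounds on F
  have hql : (1:ℝ) ≤ q * Real.log q := by nlinarith
  have hFbound : ∀ x y, -(S y) ≤ F x y ∧ F x y ≤ S y := by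
    intro x y
    by_cases ha : W x y = 0
    · constructor <;> simp [hFdef, ha, hS0 y, neg_nonpos.2 (hS0 y)]
    have hap : 0 < W x y := lt_of_le_of_ne (hW0 x y) (Ne.symm ha)
    have hSy : 0 < S y := lt_of_lt_of_le hap (hWS x y)
    have harg : W x y / (1/q * S y) = q * W x y / S y := by field_simp
    have hr : 0 < q * W x y / S y := by positivity
    have hFeq : F x y = (W x y * Real.log (q * W x y / S y)) / (q * Real.log q) := by
      rw [hFdef]; simp only []; rw [harg, Real.logb]; ring
    have hlo : W x y - S y / q ≤ W x y * Real.log (q * W x y / S y) := by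
      have hinv : Real.log (q * W x y / S y) = - Real.log (S y / (q * W x y)) := by
        rw [← Real.log_inv]
        congr 1
        field_simp
      have h1 := Real.log_le_sub_one_of_pos (x := S y / (q * W x y)) (by positivity)
      have hdiv : W x y * (S y / (q * W x y)) = S y / q := by
        field_simp
      rw [hinv]
      nlinarith [h1, hap]
    constructor
    · rw [hFeq, le_div_iff₀ (by positivity : (0:ℝ) < q * Real.log q)]
      have e1 : S y ≤ S y * (q * Real.log q) := le_mul_of_one_le_right (hS0 y) hql
      have e2 : S y / q ≤ S y := div_le_self (hS0 y) (by linarith)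
      linarith [hlo, hap.le]
    · have hup : Real.logb q (q * W x y / S y) ≤ 1 := by
        rw [← Real.logb_self_eq_one hq1]
        exact (Real.logb_le_logb hq1 hr (by positivity)).2
          (by rw [div_le_iff₀ hSy]; nlinarith [hWS x y])
      have h2 : F x y = 1/q * W x y * Real.logb q (q * W x y / S y) := by
        rw [hFdef]; simp only []; rw [harg]
      rw [h2]
      calc 1/q * W x y * Real.logb q (q * W x y / S y) ≤ 1/q * W x y * 1 :=
            mul_le_mul_of_nonneg_left hup (by positivity)
        _ ≤ S y := by
            rw [mul_one]
            have h1q : 1/q * W x y ≤ W x y := mul_le_of_le_one_left hap.le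
              (by rw [div_le_one hq0]; linarith)
            linarith [hWS x y]
  have hFabs : ∀ x y, |F x y| ≤ S y := fun x y => abs_le.2 ⟨(hFbound x y).1, (hFbound x y).2⟩
  have hFsum : ∀ x, Summable (F x) := fun x =>
    Summable.of_abs (Summable.of_nonneg_of_le (fun y => abs_nonneg _) (hFabs x) hSsum)
  -- pair functions
  set G : X × X → Y → ℝ := fun p y => W p.1 y * Real.logb q (2 * W p.1 y / (W p.1 y + W p.2 y))
    with hGdef
  set U : X × X → Y → ℝ := fun p y => W p.1 y + W p.2 y - 2*t*Real.sqrt (W p.1 y * W p.2 y)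
    with hUdef
  have hAMGM : ∀ (a b : ℝ), 0 ≤ a → 0 ≤ b → 2 * Real.sqrt (a*b) ≤ a + b := by
    intro a b ha hb
    have := abs_sub_le_tangent ha hb zero_le_one le_rfl
    simp at this
    nlinarith [this]
  have hsqrt_sum : ∀ p : X × X, Summable (fun y => Real.sqrt (W p.1 y * W p.2 y)) := by
    intro p
    apply Summable.of_nonneg_of_le (fun y => Real.sqrt_nonneg _)
      (fun y => ?_) (((hWsum p.1).add (hWsum p.2)).div_const 2)
    have := hAMGM (W p.1 y) (W p.2 y) (hW0 p.1 y) (hW0 p.2 y)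
    linarith
  have hUsum : ∀ p : X × X, Summable (U p) := by
    intro p
    apply Summable.sub ((hWsum p.1).add (hWsum p.2))
    exact (hsqrt_sum p).mul_left _
  have hUt : ∀ p : X × X, ∑' y, U p y = 2 - 2*t*Zb W p.1 p.2 := by
    intro p
    rw [hUdef]
    simp only []
    rw [Summable.tsum_sub ((hWsum p.1).add (hWsum p.2)) ((hsqrt_sum p).mul_left _),
      Summable.tsum_add (hWsum p.1) (hWsum p.2), hWt, hWt, tsum_mul_left, Zb]
    norm_num
  have hU0 : ∀ (p : X × X) y, 0 ≤ U p y := by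
    intro p y
    have h1 := hAMGM (W p.1 y) (W p.2 y) (hW0 p.1 y) (hW0 p.2 y)
    have h2 : 0 ≤ Real.sqrt (W p.1 y * W p.2 y) := Real.sqrt_nonneg _
    rw [hUdef]
    simp only []
    nlinarith
  -- constants
  set c : ℝ := Real.logb q 2 / (2 * (q * (q-1)) * Real.sqrt (1 - t^2)) with hcdef
  -- the key pointwise bound
  have hkey : ∀ y, ∑ x, F x y ≤ S y / q * Real.logb q (q/2)
      + c * ∑ p ∈ Finset.univ.offDiag, U p y := by
    intro y
    -- per-x bound
    have hcardx : ∀ x : X, ((Finset.univ.erase x).card : ℝ) = q - 1 := by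
      intro x
      rw [Finset.card_erase_of_mem (Finset.mem_univ x), Finset.card_univ]
      have : 1 ≤ Fintype.card X := by omega
      push_cast [Nat.cast_sub this]
      ring
    have hperx : ∀ x : X, F x y ≤ W x y / q * Real.logb q (q/2)
        + (1/(q*(q-1))) * ∑ x' ∈ Finset.univ.erase x, G (x, x') y := by
      intro x
      by_cases ha : W x y = 0
      · rw [hFdef, hGdef]; simp [ha]
      have hap : 0 < W x y := lt_of_le_of_ne (hW0 x y) (Ne.symm ha)
      have hSy : 0 < S y := lt_of_lt_of_le hap (hWS x y)
      have harg : W x y / (1/q * S y) = q/2 * (2 * W x y / S y) := by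
        field_simp
      have hsplit : Real.logb q (W x y / (1/q * S y))
          = Real.logb q (q/2) + Real.logb q (2 * W x y / S y) := by
        rw [harg, Real.logb_mul (by positivity) (by positivity)]
      have hmean : Real.logb q (2 * W x y / S y)
          ≤ (1/(q-1)) * ∑ x' ∈ Finset.univ.erase x, Real.logb q (2 * W x y / (W x y + W x' y)) := by
        have heach : ∀ x' ∈ Finset.univ.erase x,
            Real.logb q (2 * W x y / S y) ≤ Real.logb q (2 * W x y / (W x y + W x' y)) := by
          intro x' hx'
          have hxx' : x ≠ x' := (Finset.ne_of_mem_erase hx').symm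
          have hsub : W x y + W x' y ≤ S y := by
            have hsubset : ({x, x'} : Finset X) ⊆ Finset.univ := Finset.subset_univ _
            have := Finset.sum_le_sum_of_subset_of_nonneg hsubset
              (fun i _ _ => hW0 i y)
            rwa [Finset.sum_pair hxx'] at this
          have hden : 0 < W x y + W x' y := by nlinarith [hW0 x' y]
          apply (Real.logb_le_logb hq1 (by positivity) (by positivity)).2
          gcongr
        have hns := Finset.card_nsmul_le_sum _ _ _ heach
        rw [nsmul_eq_mul, hcardx x] at hns
        have e : (1/(q-1)) * ∑ x' ∈ Finset.univ.erase x,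
            Real.logb q (2 * W x y / (W x y + W x' y))
            = (∑ x' ∈ Finset.univ.erase x,
                Real.logb q (2 * W x y / (W x y + W x' y))) / (q-1) := by ring
        rw [e, le_div_iff₀ hqm1]
        linarith [hns]
      -- now combine
      have hFy : F x y = 1/q * W x y * (Real.logb q (q/2) + Real.logb q (2 * W x y / S y)) := by
        rw [hFdef]; simp only []; rw [hsplit]
      rw [hFy]
      have hkey2 := mul_le_mul_of_nonneg_left hmean
        (by positivity : (0:ℝ) ≤ 1/q * W x y)
      have eG : 1/q * W x y * ((1/(q-1)) * ∑ x' ∈ Finset.univ.erase x,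
            Real.logb q (2 * W x y / (W x y + W x' y)))
          = (1/(q*(q-1))) * ∑ x' ∈ Finset.univ.erase x, G (x, x') y := by
        rw [hGdef]
        simp only []
        simp only [Finset.mul_sum]
        apply Finset.sum_congr rfl
        intro x' _
        have h1 : q ≠ 0 := ne_of_gt hq0
        have h2 : q - 1 ≠ 0 := ne_of_gt hqm1
        field_simp
      rw [eG] at hkey2
      have : 1/q * W x y * Real.logb q (q/2) = W x y / q * Real.logb q (q/2) := by ring
      nlinarith [hkey2]
    -- sum the per-x bound over x
    have hsum1 := Finset.sum_le_sum (s := Finset.univ) (fun x _ => hperx x)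
    rw [Finset.sum_add_distrib] at hsum1
    have e1 : ∑ x : X, W x y / q * Real.logb q (q/2) = S y / q * Real.logb q (q/2) := by
      rw [← Finset.sum_mul, ← Finset.sum_div]
    have e2 : ∑ x : X, (1/(q*(q-1))) * ∑ x' ∈ Finset.univ.erase x, G (x, x') y
        = (1/(q*(q-1))) * ∑ p ∈ Finset.univ.offDiag, G p y := by
      rw [← Finset.mul_sum, sum_offDiag_eq (fun p => G p y)]
    rw [e1, e2] at hsum1
    -- now bound the offDiag sum of G by U
    have hGU : ∑ p ∈ Finset.univ.offDiag, G p y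
        ≤ ∑ p ∈ Finset.univ.offDiag, (Real.logb q 2 / Real.sqrt (1 - t^2) / 2) * U p y := by
      have hswap := sum_offDiag_swap (fun p => G p y)
      have hhalf : ∑ p ∈ Finset.univ.offDiag, G p y
          = (1/2) * ∑ p ∈ Finset.univ.offDiag, (G p y + G (p.2, p.1) y) := by
        rw [Finset.sum_add_distrib, hswap]
        ring
      rw [hhalf, Finset.mul_sum]
      apply Finset.sum_le_sum
      intro p hp
      have ha := hW0 p.1 y
      have hb := hW0 p.2 y
      have hpl := pair_log ha hb
      have hlogb : G p y + G (p.2, p.1) y ≤ |W p.1 y - W p.2 y| * Real.logb q 2 := by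
        rw [hGdef]
        simp only []
        rw [add_comm (W p.2 y) (W p.1 y)]
        simp only [Real.logb]
        calc W p.1 y * (Real.log (2 * W p.1 y / (W p.1 y + W p.2 y)) / Real.log q)
              + W p.2 y * (Real.log (2 * W p.2 y / (W p.1 y + W p.2 y)) / Real.log q)
            = (W p.1 y * Real.log (2 * W p.1 y / (W p.1 y + W p.2 y))
              + W p.2 y * Real.log (2 * W p.2 y / (W p.1 y + W p.2 y))) / Real.log q := by
              ring
          _ ≤ (|W p.1 y - W p.2 y| * Real.log 2) / Real.log q := by gcongr
          _ = |W p.1 y - W p.2 y| * (Real.log 2 / Real.log q) := by ring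
      have htan := abs_sub_le_tangent ha hb ht0 ht1.le
      have habsU : |W p.1 y - W p.2 y| ≤ U p y / Real.sqrt (1 - t^2) := by
        rw [le_div_iff₀ hst, hUdef]
        exact htan
      have hchain : G p y + G (p.2, p.1) y ≤ (U p y / Real.sqrt (1 - t^2)) * Real.logb q 2 :=
        le_trans hlogb (mul_le_mul_of_nonneg_right habsU hlogb2)
      calc 1/2 * (G p y + G (p.2, p.1) y)
          ≤ 1/2 * ((U p y / Real.sqrt (1 - t^2)) * Real.logb q 2) := by linarith
        _ = (Real.logb q 2 / Real.sqrt (1 - t^2) / 2) * U p y := by ring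
    -- combine
    have hcU : ∑ p ∈ Finset.univ.offDiag, (Real.logb q 2 / Real.sqrt (1 - t^2) / 2) * U p y
        = (q * (q-1)) * (c * ∑ p ∈ Finset.univ.offDiag, U p y) := by
      rw [← Finset.mul_sum, hcdef]
      have h1 : Real.sqrt (1 - t^2) ≠ 0 := ne_of_gt hst
      field_simp
    have hfinal : (1/(q*(q-1))) * ∑ p ∈ Finset.univ.offDiag, G p y
        ≤ c * ∑ p ∈ Finset.univ.offDiag, U p y := by
      have h0 : 0 < 1/(q*(q-1)) := by positivity
      have := mul_le_mul_of_nonneg_left (le_trans hGU (le_of_eq hcU)) h0.le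
      calc (1/(q*(q-1))) * ∑ p ∈ Finset.univ.offDiag, G p y
          ≤ (1/(q*(q-1))) * ((q * (q-1)) * (c * ∑ p ∈ Finset.univ.offDiag, U p y)) := this
        _ = c * ∑ p ∈ Finset.univ.offDiag, U p y := by
            field_simp
    linarith [hsum1, hfinal]
  -- now sum over y
  have hFsumy : Summable (fun y => ∑ x, F x y) := summable_sum fun x _ => hFsum x
  have hRsum : Summable (fun y => S y / q * Real.logb q (q/2)
      + c * ∑ p ∈ Finset.univ.offDiag, U p y) := by
    apply Summable.add
    · exact (hSsum.div_const q).mul_right _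
    · exact (summable_sum fun p _ => hUsum p).mul_left c
  have hmain : symCap W ≤ ∑' y, (S y / q * Real.logb q (q/2)
      + c * ∑ p ∈ Finset.univ.offDiag, U p y) := by
    rw [hsymCap, ← Summable.tsum_finsetSum fun x _ => hFsum x]
    exact Summable.tsum_le_tsum hkey hFsumy hRsum
  -- compute the RHS tsum
  have hcompute : ∑' y, (S y / q * Real.logb q (q/2)
      + c * ∑ p ∈ Finset.univ.offDiag, U p y)
      = Real.logb q (q/2) + Real.logb q 2 * ((1 - t * Zavg W) / Real.sqrt (1 - t^2)) := by
    rw [Summable.tsum_add ((hSsum.div_const q).mul_right _) ((summable_sum fun p _ => hUsum p).mul_left c)]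
    have hA : ∑' y, S y / q * Real.logb q (q/2) = Real.logb q (q/2) := by
      rw [tsum_mul_right]
      rw [tsum_div_const, hSt]  -- name?
      field_simp
    have hB : ∑' y, c * ∑ p ∈ Finset.univ.offDiag, U p y
        = Real.logb q 2 * ((1 - t * Zavg W) / Real.sqrt (1 - t^2)) := by
      rw [tsum_mul_left, Summable.tsum_finsetSum fun p _ => hUsum p]
      have hZ : ∑ p ∈ Finset.univ.offDiag, ∑' y, U p y
          = 2 * (q * (q-1)) - 2*t*((q * (q-1)) * Zavg W) := by
        have : ∀ p ∈ Finset.univ.offDiag, ∑' y, U p y = 2 - 2*t*Zb W p.1 p.2 :=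
          fun p _ => hUt p
        rw [Finset.sum_congr rfl this, Finset.sum_sub_distrib, Finset.sum_const]
        have hcardoff : (((Finset.univ : Finset X).offDiag.card : ℕ) : ℝ) = q * (q - 1) := by
          rw [Finset.offDiag_card, Finset.card_univ]
          have h1 : Fintype.card X ≤ Fintype.card X * Fintype.card X :=
            Nat.le_mul_of_pos_left _ (by omega)
          push_cast [Nat.cast_sub h1]
          ring
        have hZsum : ∑ p ∈ Finset.univ.offDiag, Zb W p.1 p.2 = (q * (q-1)) * Zavg W := by
          rw [Zavg, ← hqdef]
          field_simp
        rw [← Finset.mul_sum, hZsum, nsmul_eq_mul, hcardoff]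
        ring
      rw [hZ, hcdef]
      have h1 : Real.sqrt (1 - t^2) ≠ 0 := ne_of_gt hst
      field_simp
    rw [hA, hB]
  linarith [hmain, le_of_eq hcompute]


lemma Zb_nonneg {X Y : Type*} (W : X → Y → ℝ) (x x' : X) : 0 ≤ Zb W x x' :=
  tsum_nonneg fun y => Real.sqrt_nonneg _

lemma Zb_le_one {X Y : Type*} (W : X → Y → ℝ) (hW : IsChannel W) (x x' : X) :
    Zb W x x' ≤ 1 := by
  obtain ⟨hW0, hW1⟩ := hW
  have hAM : ∀ y, Real.sqrt (W x y * W x' y) ≤ (W x y + W x' y)/2 := by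
    intro y
    have := abs_sub_le_tangent (hW0 x y) (hW0 x' y) zero_le_one le_rfl
    simp at this
    nlinarith [this]
  have hsum2 : Summable (fun y => (W x y + W x' y)/2) :=
    (((hW1 x).summable).add ((hW1 x').summable)).div_const 2
  have hsq : Summable (fun y => Real.sqrt (W x y * W x' y)) :=
    Summable.of_nonneg_of_le (fun y => Real.sqrt_nonneg _) hAM hsum2
  have ht2 : ∑' y, (W x y + W x' y)/2 = 1 := by
    rw [tsum_div_const, Summable.tsum_add (hW1 x).summable (hW1 x').summable,
      (hW1 x).tsum_eq, (hW1 x').tsum_eq]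
    norm_num
  calc Zb W x x' = ∑' y, Real.sqrt (W x y * W x' y) := rfl
    _ ≤ ∑' y, (W x y + W x' y)/2 := Summable.tsum_le_tsum hAM hsq hsum2
    _ = 1 := ht2

/-- `I(W) ≤ log_q (q/2) + (log_q 2) √(1 - Z(W)²)`. -/
theorem symCap_le_of_bhattacharyya {X Y : Type*} [Fintype X] [Countable Y]
    (hq : 2 ≤ Fintype.card X) (W : X → Y → ℝ) (hW : IsChannel W) :
    symCap W ≤ Real.logb (Fintype.card X) ((Fintype.card X : ℝ) / 2) +
      Real.logb (Fintype.card X) 2 * Real.sqrt (1 - Zavg W ^ 2) := by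
  have hq2 : (2:ℝ) ≤ (Fintype.card X : ℝ) := by exact_mod_cast hq
  set q : ℝ := (Fintype.card X : ℝ) with hqdef
  have hq0 : 0 < q := by linarith
  have hq1 : 1 < q := by linarith
  have hqm1 : 0 < q - 1 := by linarith
  have hlq : 0 < Real.log q := Real.log_pos hq1
  have hB : 0 < Real.logb q 2 := by
    rw [Real.logb]
    have : 0 < Real.log 2 := Real.log_pos (by norm_num)
    positivity
  have hcardoff : (((Finset.univ : Finset X).offDiag.card : ℕ) : ℝ) = q * (q - 1) := by
    rw [Finset.offDiag_card, Finset.card_univ]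
    have h1 : Fintype.card X ≤ Fintype.card X * Fintype.card X :=
      Nat.le_mul_of_pos_left _ (by omega)
    push_cast [Nat.cast_sub h1]
    ring
  have hZ0 : 0 ≤ Zavg W := by
    rw [Zavg]
    apply mul_nonneg
    · positivity
    · exact Finset.sum_nonneg fun p _ => Zb_nonneg W p.1 p.2
  have hZ1 : Zavg W ≤ 1 := by
    rw [Zavg]
    have hsum : ∑ p ∈ Finset.univ.offDiag, Zb W p.1 p.2
        ≤ ∑ p ∈ (Finset.univ : Finset X).offDiag, (1:ℝ) :=
      Finset.sum_le_sum fun p _ => Zb_le_one W hW p.1 p.2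
    rw [Finset.sum_const, nsmul_eq_mul, mul_one] at hsum
    rw [hcardoff] at hsum
    calc (1 / (q * (q - 1))) * ∑ p ∈ Finset.univ.offDiag, Zb W p.1 p.2
        ≤ (1 / (q * (q-1))) * (q * (q-1)) := by
          apply mul_le_mul_of_nonneg_left hsum (by positivity)
      _ = 1 := by field_simp
  rcases lt_or_eq_of_le hZ1 with hZlt | hZeq
  · have hm := master hq W hW hZ0 hZlt
    have he : (1 - Zavg W * Zavg W) / Real.sqrt (1 - Zavg W ^ 2)
        = Real.sqrt (1 - Zavg W ^ 2) := by
      rw [show 1 - Zavg W * Zavg W = 1 - Zavg W^2 by ring, Real.div_sqrt]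
    rw [he] at hm
    exact hm
  · rw [hZeq]
    norm_num
    apply le_of_forall_pos_le_add
    intro ε hε
    set m : ℝ := min ((ε / Real.logb q 2)^2) 1 with hmdef
    have hm0 : 0 < m := lt_min (by positivity) one_pos
    have hm1 : m ≤ 1 := min_le_right _ _
    have ht0 : (0:ℝ) ≤ 1 - m := by linarith
    have ht1 : 1 - m < 1 := by linarith
    have hmas := master hq W hW ht0 ht1
    rw [hZeq] at hmas
    have hnum : 1 - (1 - m) * 1 = m := by ring
    rw [hnum] at hmas
    have hsm : 0 < Real.sqrt m := Real.sqrt_pos.2 hm0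
    have hden : Real.sqrt m ≤ Real.sqrt (1 - (1-m)^2) := Real.sqrt_le_sqrt (by nlinarith)
    have hd1 : m / Real.sqrt (1 - (1-m)^2) ≤ m / Real.sqrt m := by
      gcongr
    rw [Real.div_sqrt] at hd1
    have hd2 : Real.sqrt m ≤ ε / Real.logb q 2 := by
      calc Real.sqrt m ≤ Real.sqrt ((ε / Real.logb q 2)^2) :=
            Real.sqrt_le_sqrt (min_le_left _ _)
        _ = ε / Real.logb q 2 := by
            rw [Real.sqrt_sq (by positivity)]
    have hfin : Real.logb q 2 * (m / Real.sqrt (1 - (1-m)^2)) ≤ ε := by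
      have h3 : m / Real.sqrt (1 - (1-m)^2) ≤ ε / Real.logb q 2 := le_trans hd1 hd2
      calc Real.logb q 2 * (m / Real.sqrt (1 - (1-m)^2))
          ≤ Real.logb q 2 * (ε / Real.logb q 2) := by
            apply mul_le_mul_of_nonneg_left h3 hB.le
        _ = ε := by field_simp
    linarith [hmas, hfin]


end Polar
end
end

section
/- For any q-ary DMC W and any a, b ∈ 𝒳, one has Σ_{y : Σ_{c∈𝒳} W(y|c) > 0} W(y|a)·W(y|b) / (Σ_{c∈𝒳} W(y|c)) ≥ (1/q) · Z_{a,b}(W)². -/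
open MeasureTheory Filter Real
open scoped Classical

noncomputable section

namespace Polar

/-- `Σ_{y : Σ_c W(y|c) > 0} W(y|a) W(y|b) / Σ_c W(y|c)
≥ (1/q) Z_{a,b}(W)²`. -/
theorem bhattacharyya_sq_le {X Y : Type*} [Fintype X] [Countable Y]
    (hq : 2 ≤ Fintype.card X) (W : X → Y → ℝ) (hW : IsChannel W) (a b : X) :
    (1 / (Fintype.card X : ℝ)) * Zb W a b ^ 2 ≤
      ∑' y, (if 0 < ∑ c : X, W c y then W a y * W b y / ∑ c : X, W c y else 0) := by
  obtain ⟨hpos, hsum⟩ := hW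
  set q : ℝ := (Fintype.card X : ℝ) with hqdef
  have hq0 : (0:ℝ) < q := by
    have h : (0:ℕ) < Fintype.card X := by omega
    rw [hqdef]
    exact_mod_cast h
  set S : Y → ℝ := fun y => ∑ c : X, W c y with hSdef
  set g : Y → ℝ := fun y => Real.sqrt (W a y * W b y) with hgdef
  set f : Y → ℝ := fun y => if 0 < S y then W a y * W b y / S y else 0 with hfdef
  have hS_nonneg : ∀ y, 0 ≤ S y := fun y => Finset.sum_nonneg fun c _ => hpos c y
  have hle_S : ∀ (x : X) y, W x y ≤ S y := fun x y =>
    Finset.single_le_sum (fun c _ => hpos c y) (Finset.mem_univ x)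
  have hf_nonneg : ∀ y, 0 ≤ f y := by
    intro y
    simp only [hfdef]
    split
    · exact div_nonneg (mul_nonneg (hpos a y) (hpos b y)) (hS_nonneg y)
    · exact le_refl 0
  -- key pointwise identity: g y ^ 2 = f y * S y
  have hkey : ∀ y, g y ^ 2 = f y * S y := by
    intro y
    simp only [hgdef, hfdef]
    rw [Real.sq_sqrt (mul_nonneg (hpos a y) (hpos b y))]
    split
    · rename_i h
      field_simp
    · rename_i h
      have hS0 : S y = 0 := le_antisymm (not_lt.mp h) (hS_nonneg y)
      have ha0 : W a y = 0 := le_antisymm (hS0 ▸ hle_S a y) (hpos a y)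
      simp [ha0]
  -- summability facts
  have hSummW : ∀ x : X, Summable (W x) := fun x => (hsum x).summable
  have hS_hasSum : HasSum S q := by
    have : HasSum (fun y => ∑ c : X, W c y) (∑ c : X, (1:ℝ)) :=
      hasSum_sum fun c _ => hsum c
    simpa [hqdef] using this
  have hSummS : Summable S := hS_hasSum.summable
  have hg_nonneg : ∀ y, 0 ≤ g y := fun y => Real.sqrt_nonneg _
  have hg_le : ∀ y, g y ≤ (W a y + W b y) / 2 := by
    intro y
    have h1 := Real.sq_sqrt (hpos a y)
    have h2 := Real.sq_sqrt (hpos b y)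
    have h3 : g y = Real.sqrt (W a y) * Real.sqrt (W b y) := Real.sqrt_mul (hpos a y) _
    nlinarith [sq_nonneg (Real.sqrt (W a y) - Real.sqrt (W b y)), Real.sqrt_nonneg (W a y),
      Real.sqrt_nonneg (W b y)]
  have hSummg : Summable g :=
    Summable.of_nonneg_of_le hg_nonneg hg_le (((hSummW a).add (hSummW b)).div_const 2)
  have hf_le_g : ∀ y, f y ≤ g y := by
    intro y
    simp only [hfdef]
    split
    · rename_i h
      rw [div_le_iff₀ h]
      have hgS : g y ≤ S y := by
        have : W a y * W b y ≤ S y * S y :=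
          mul_le_mul (hle_S a y) (hle_S b y) (hpos b y) (hS_nonneg y)
        calc g y ≤ Real.sqrt (S y * S y) := Real.sqrt_le_sqrt this
        _ = S y := Real.sqrt_mul_self (hS_nonneg y)
      have hgg : g y * g y = W a y * W b y :=
        Real.mul_self_sqrt (mul_nonneg (hpos a y) (hpos b y))
      calc W a y * W b y = g y * g y := hgg.symm
      _ ≤ g y * S y := mul_le_mul_of_nonneg_left hgS (hg_nonneg y)
    · exact hg_nonneg y
  have hSummf : Summable f := Summable.of_nonneg_of_le hf_nonneg hf_le_g hSummg
  have hTf : 0 ≤ ∑' y, f y := tsum_nonneg hf_nonneg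
  -- finite Cauchy-Schwarz + limit
  have hfin : ∀ T : Finset Y, (∑ y ∈ T, g y) ≤ Real.sqrt ((∑' y, f y) * q) := by
    intro T
    have hCS : (∑ y ∈ T, g y) ^ 2 ≤ (∑ y ∈ T, f y) * ∑ y ∈ T, S y :=
      Finset.sum_sq_le_sum_mul_sum_of_sq_eq_mul T (fun y _ => hf_nonneg y)
        (fun y _ => hS_nonneg y) (fun y _ => hkey y)
    have h1 : (∑ y ∈ T, f y) ≤ ∑' y, f y :=
      Summable.sum_le_tsum T (fun y _ => hf_nonneg y) hSummf
    have h2 : (∑ y ∈ T, S y) ≤ q :=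
      (Summable.sum_le_tsum T (fun y _ => hS_nonneg y) hS_hasSum.summable).trans_eq hS_hasSum.tsum_eq
    have h3 : (∑ y ∈ T, g y) ^ 2 ≤ (∑' y, f y) * q := by
      calc (∑ y ∈ T, g y) ^ 2 ≤ (∑ y ∈ T, f y) * ∑ y ∈ T, S y := hCS
      _ ≤ (∑' y, f y) * q := by
          apply mul_le_mul h1 h2 (Finset.sum_nonneg fun y _ => hS_nonneg y) hTf
    exact (Real.le_sqrt (Finset.sum_nonneg fun y _ => hg_nonneg y) (mul_nonneg hTf hq0.le)).mpr h3
  have hZ : Zb W a b ≤ Real.sqrt ((∑' y, f y) * q) := by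
    unfold Zb
    exact Summable.tsum_le_of_sum_le hSummg hfin
  have hZnn : 0 ≤ Zb W a b := tsum_nonneg fun y => Real.sqrt_nonneg _
  have hZsq : Zb W a b ^ 2 ≤ (∑' y, f y) * q := by
    calc Zb W a b ^ 2 ≤ Real.sqrt ((∑' y, f y) * q) ^ 2 := by
          exact pow_le_pow_left₀ hZnn hZ 2
    _ = (∑' y, f y) * q := Real.sq_sqrt (mul_nonneg hTf hq0.le)
  rw [div_mul_eq_mul_div, one_mul, div_le_iff₀ hq0]
  calc Zb W a b ^ 2 ≤ (∑' y, f y) * q := hZsq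
  _ = (∑' y, (if 0 < ∑ c : X, W c y then W a y * W b y / ∑ c : X, W c y else 0)) * q := rfl

end Polar
end
end

section
/- Let {X̌_n}_{n∈ℕ} be a random process with values in (0,1) such that (1) X̌_n converges almost surely to a random variable X̌_∞, and (2) X̌_{n+1} ≥ č · X̌_n^{Ď_n} for all n, where {Ď_n}_{n∈ℕ} are i.i.d. random variables with Ď_n ≥ 1 and č is a positive constant. Then for every β > E[log₂ Ď₁], lim_{n→∞} P( X̌_n < 2^{−2^{βn}} ) = 0. -/
open MeasureTheory Filter Real
open scoped Classical

noncomputable section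

namespace Polar

private lemma aux_pointwise (X : ℕ → ℝ) (d : ℕ → ℝ) (c β m : ℝ) (hc : 0 < c)
    (hX : ∀ n, X n ∈ Set.Ioo (0 : ℝ) 1) (hd : ∀ n, 1 ≤ d n)
    (hrec : ∀ n, c * X n ^ d n ≤ X (n + 1))
    (hm : m < β)
    (hS : Tendsto (fun n : ℕ => (∑ i ∈ Finset.range n, Real.logb 2 (d i)) / n)
      atTop (nhds m)) :
    ∀ᶠ n : ℕ in atTop, ¬ (X n < 2 ^ (-(2 : ℝ) ^ (β * n))) := by
  set Z : ℕ → ℝ := fun n => -Real.logb 2 (X n) with hZ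
  have hXpos : ∀ n, 0 < X n := fun n => (hX n).1
  have hZpos : ∀ n, 0 < Z n := by
    intro n
    have := Real.logb_neg (b := 2) one_lt_two (hXpos n) (hX n).2
    simp [hZ]; linarith
  set a : ℝ := max 0 (-Real.logb 2 c) with ha
  have ha0 : 0 ≤ a := le_max_left _ _
  have hdpos : ∀ n, 0 < d n := fun n => lt_of_lt_of_le one_pos (hd n)
  -- recursion on Z
  have hZrec : ∀ n, Z (n + 1) ≤ d n * Z n + a := by
    intro n
    have h1 : Real.logb 2 (c * X n ^ d n) ≤ Real.logb 2 (X (n + 1)) :=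
      Real.logb_le_logb_of_le one_lt_two
        (mul_pos hc (Real.rpow_pos_of_pos (hXpos n) _)) (hrec n)
    rw [Real.logb_mul hc.ne' (Real.rpow_pos_of_pos (hXpos n) _).ne',
      Real.logb_rpow_eq_mul_logb_of_pos (hXpos n)] at h1
    have h2 : -Real.logb 2 c ≤ a := le_max_right _ _
    simp only [hZ]
    nlinarith [hd n]
  -- product bound
  have hprod : ∀ n, (1 : ℝ) ≤ ∏ i ∈ Finset.range n, d i := by
    intro n
    induction n with
    | zero => simp
    | succ n ih =>
      rw [Finset.prod_range_succ]
      nlinarith [hd n]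
  have hbound : ∀ n : ℕ, Z n ≤ (Z 0 + n * a) * ∏ i ∈ Finset.range n, d i := by
    intro n
    induction n with
    | zero => simp
    | succ n ih =>
      have h1 : Z (n + 1) ≤ d n * Z n + a := hZrec n
      have h2 : d n * Z n ≤ d n * ((Z 0 + n * a) * ∏ i ∈ Finset.range n, d i) :=
        mul_le_mul_of_nonneg_left ih (hdpos n).le
      rw [Finset.prod_range_succ]
      have h3 : (1 : ℝ) ≤ (∏ i ∈ Finset.range n, d i) * d n := by
        calc (1:ℝ) = 1 * 1 := by ring
        _ ≤ _ := mul_le_mul (hprod n) (hd n) one_pos.le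
            (le_trans zero_le_one (hprod n))
      push_cast
      nlinarith [hZpos 0, hprod n, hdpos n]
  -- log of the bound
  set K : ℝ := Real.logb 2 (Z 0 + a) with hK
  have hSum : ∀ n : ℕ, Real.logb 2 (∏ i ∈ Finset.range n, d i)
      = ∑ i ∈ Finset.range n, Real.logb 2 (d i) :=
    fun n => Real.logb_prod _ _ fun i _ => (hdpos i).ne'
  have hlogbound : ∀ n : ℕ, Real.logb 2 (Z n)
      ≤ K + Real.logb 2 ((n : ℝ) + 1) + ∑ i ∈ Finset.range n, Real.logb 2 (d i) := by
    intro n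
    have hna : (0:ℝ) ≤ (n:ℝ) * a := mul_nonneg (Nat.cast_nonneg n) ha0
    have hpos1 : 0 < Z 0 + (n : ℝ) * a := by linarith [hZpos 0]
    have hposPi : 0 < ∏ i ∈ Finset.range n, d i := lt_of_lt_of_le one_pos (hprod n)
    have step1 : Real.logb 2 (Z n)
        ≤ Real.logb 2 ((Z 0 + n * a) * ∏ i ∈ Finset.range n, d i) :=
      Real.logb_le_logb_of_le one_lt_two (hZpos n) (hbound n)
    rw [Real.logb_mul hpos1.ne' hposPi.ne', hSum n] at step1
    have step2 : Real.logb 2 (Z 0 + (n : ℝ) * a)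
        ≤ Real.logb 2 ((Z 0 + a) * ((n : ℝ) + 1)) := by
      apply Real.logb_le_logb_of_le one_lt_two hpos1
      have hn1 : (1:ℝ) ≤ (n:ℝ) + 1 := by have := Nat.cast_nonneg (α := ℝ) n; linarith
      nlinarith [hZpos 0, Nat.cast_nonneg (α := ℝ) n]
    rw [Real.logb_mul ((by nlinarith [hZpos 0] : (0:ℝ) < Z 0 + a).ne')
      (by positivity : ((n:ℝ) + 1) ≠ 0)] at step2
    simp only [hK]
    linarith
  -- the averaged bound tends to m < β
  have hlog1 : Tendsto (fun n : ℕ => Real.log ((n : ℝ) + 1) / ((n : ℝ) + 1))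
      atTop (nhds 0) := by
    have := Real.isLittleO_log_id_atTop.tendsto_div_nhds_zero
    exact this.comp (tendsto_atTop_add_const_right atTop (1:ℝ) tendsto_natCast_atTop_atTop)
  have hrat : Tendsto (fun n : ℕ => ((n : ℝ) + 1) / n) atTop (nhds 1) := by
    have h0 : Tendsto (fun n : ℕ => 1 + 1 / (n : ℝ)) atTop (nhds 1) := by
      simpa using tendsto_const_nhds.add (tendsto_one_div_atTop_nhds_zero_nat : Tendsto (fun n : ℕ => 1 / (n : ℝ)) atTop (nhds 0))
    apply h0.congr'
    filter_upwards [eventually_ge_atTop 1] with n hn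
    have : (n : ℝ) ≠ 0 := Nat.cast_ne_zero.2 (by omega)
    field_simp
  have hlog2 : Tendsto (fun n : ℕ => Real.logb 2 ((n : ℝ) + 1) / n) atTop (nhds 0) := by
    have h := (hlog1.mul hrat).div_const (Real.log 2)
    simp only [zero_mul, zero_div] at h
    apply h.congr
    intro n
    have hn1 : ((n : ℝ) + 1) ≠ 0 := by positivity
    rw [Real.logb]
    field_simp
  have hT : Tendsto (fun n : ℕ => K / n + Real.logb 2 ((n : ℝ) + 1) / n
      + (∑ i ∈ Finset.range n, Real.logb 2 (d i)) / n) atTop (nhds m) := by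
    have := ((tendsto_const_div_atTop_nhds_zero_nat K).add hlog2).add hS
    simpa using this
  filter_upwards [hT.eventually_lt_const hm, eventually_ge_atTop 1] with n hTn hn1
  have hnpos : (0:ℝ) < n := by exact_mod_cast Nat.pos_of_ne_zero (by omega)
  have hsum_lt : K + Real.logb 2 ((n : ℝ) + 1) + ∑ i ∈ Finset.range n, Real.logb 2 (d i)
      < β * n := by
    have heq : K + Real.logb 2 ((n : ℝ) + 1) + ∑ i ∈ Finset.range n, Real.logb 2 (d i)
        = (K / n + Real.logb 2 ((n : ℝ) + 1) / n
          + (∑ i ∈ Finset.range n, Real.logb 2 (d i)) / n) * n := by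
      field_simp
    rw [heq]
    calc _ < β * n := by exact mul_lt_mul_of_pos_right hTn hnpos
    _ = β * n := rfl
  have hZlt : Z n < 2 ^ (β * (n:ℝ)) := by
    rw [← Real.logb_lt_iff_lt_rpow one_lt_two (hZpos n)]
    exact lt_of_le_of_lt (hlogbound n) hsum_lt
  -- conclude
  intro hlt
  have hXgt : (2:ℝ) ^ (-(2 : ℝ) ^ (β * (n:ℝ))) < X n := by
    rw [← Real.lt_logb_iff_rpow_lt one_lt_two (hXpos n)]
    have : -Real.logb 2 (X n) < 2 ^ (β * (n:ℝ)) := hZlt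
    linarith
  exact absurd hlt (not_lt.2 hXgt.le)

/-- rate of polarization, lower process. -/
theorem rate_of_polarization_lower {Ω : Type*} [MeasurableSpace Ω]
    (P : Measure Ω) [IsProbabilityMeasure P]
    (Xh : ℕ → Ω → ℝ) (Xinf : Ω → ℝ) (D : ℕ → Ω → ℝ) (c : ℝ) (hc : 0 < c)
    (hXmeas : ∀ n, Measurable (Xh n))
    (hXval : ∀ n ω, Xh n ω ∈ Set.Ioo (0 : ℝ) 1)
    (hXconv : ∀ᵐ ω ∂P, Tendsto (fun n => Xh n ω) atTop (nhds (Xinf ω)))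
    (hDmeas : ∀ n, Measurable (D n))
    (hDone : ∀ n, ∀ᵐ ω ∂P, 1 ≤ D n ω)
    (hDindep : ProbabilityTheory.iIndepFun D P)
    (hDident : ∀ n, Measure.map (D n) P = Measure.map (D 0) P)
    (hDint : Integrable (fun ω => Real.logb 2 (D 0 ω)) P)
    (hrec : ∀ n, ∀ᵐ ω ∂P, c * Xh n ω ^ D n ω ≤ Xh (n + 1) ω)
    (β : ℝ) (hβ : ∫ ω, Real.logb 2 (D 0 ω) ∂P < β) :
    Tendsto (fun n => (P {ω | Xh n ω < 2 ^ (-(2 : ℝ) ^ (β * n))}).toReal)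
      atTop (nhds 0) := by
  have mlogb : Measurable fun x : ℝ => Real.logb 2 x := by
    simpa [Real.logb] using Real.measurable_log.div_const (Real.log 2)
  -- strong law of large numbers for logb 2 (D i)
  have hSLLN : ∀ᵐ ω ∂P, Tendsto
      (fun n : ℕ => (∑ i ∈ Finset.range n, Real.logb 2 (D i ω)) / n)
      atTop (nhds (∫ ω, Real.logb 2 (D 0 ω) ∂P)) := by
    exact ProbabilityTheory.strong_law_ae_real (fun i ω => Real.logb 2 (D i ω)) hDint
      (fun i j hij => (hDindep.indepFun hij).comp mlogb mlogb)
      (fun i => (ProbabilityTheory.IdentDistrib.mk (hDmeas i).aemeasurable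
        (hDmeas 0).aemeasurable (hDident i)).comp mlogb)
  -- almost everywhere, eventually the event fails
  have hae : ∀ᵐ ω ∂P, ∀ᶠ n : ℕ in atTop,
      (ω ∈ {ω | Xh n ω < 2 ^ (-(2 : ℝ) ^ (β * n))} ↔ ω ∈ (∅ : Set Ω)) := by
    filter_upwards [hSLLN, ae_all_iff.2 hDone, ae_all_iff.2 hrec] with ω hω hone hrecω
    have := aux_pointwise (fun n => Xh n ω) (fun n => D n ω) c β
      (∫ ω, Real.logb 2 (D 0 ω) ∂P) hc (fun n => hXval n ω) hone hrecω hβ hω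
    filter_upwards [this] with n hn
    simp [hn]
  have hmble : ∀ n : ℕ, MeasurableSet {ω | Xh n ω < 2 ^ (-(2 : ℝ) ^ (β * n))} :=
    fun n => measurableSet_lt (hXmeas n) measurable_const
  have hmeas := tendsto_measure_of_ae_tendsto_indicator_of_isFiniteMeasure
    (μ := P) (A := (∅ : Set Ω)) atTop MeasurableSet.empty hmble hae
  rw [measure_empty] at hmeas
  have := (ENNReal.tendsto_toReal (by simp : (0:ENNReal) ≠ ⊤)).comp hmeas
  simpa [Function.comp_def] using this
end Polar
end
end
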